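/- Fix integers N and k with 1 ≤ k ≤ N, and integers i, i′ with 0 ≤ i ≤ k and 0 ≤ i′ ≤ k. Let X := {1,…,N}, let D be the set of all strings z ∈ {0,1}^N of Hamming weight k, and for z, z′ ∈ D write |z − z′| for half the Hamming distance between z and z′. Let A_i be the D × D matrix with (z,z′)-entry equal to 1 if |z − z′| = i and 0 otherwise. For z ∈ D let Ψ(z) := k^{−1/2} Σ_{x : z_x = 1} e_x ∈ ℂ^X, and let B_{i′} := Σ_{z,z′ ∈ D, |z−z′| = i′} (Ψ(z) ⊗ e_z)(Ψ(z′) ⊗ e_{z′})* be a matrix on ℂ^{X × D}. Then Tr((Id_{ℂ^X} ⊗ A_i) · B_{i′}) = δ_{i,i′} · C(N,k) · C(k,i) · C(N−k,i) · (k−i)/k. -/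

import Mathlib

/-- The set `D` of strings `z ∈ {0,1}^N` of Hamming weight `k`. -/
abbrev DSet (N k : ℕ) : Type :=
  {z : Fin N → Bool // (Finset.univ.filter fun x => z x = true).card = k}

/-- The vector `Ψ(z) = k^{-1/2} Σ_{x : z_x = 1} e_x ∈ ℂ^X`. -/
noncomputable def PsiV (N k : ℕ) (z : DSet N k) : Fin N → ℂ :=
  fun x => if z.val x = true then ((Real.sqrt k : ℝ)⁻¹ : ℂ) else 0

open Finset

def supp {N : ℕ} (z : Fin N → Bool) : Finset (Fin N) := univ.filter (fun x => z x = true)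

lemma supp_decide {N : ℕ} (S : Finset (Fin N)) :
    supp (fun x => decide (x ∈ S)) = S := by
  ext x; simp [supp]

lemma hd_supp {N : ℕ} (z z' : Fin N → Bool) :
    hammingDist z z' = (supp z \ supp z').card + (supp z' \ supp z).card := by
  rw [hammingDist, ← card_union_of_disjoint disjoint_sdiff_sdiff]
  congr 1
  ext x
  simp only [supp, mem_filter, mem_univ, true_and, mem_union, mem_sdiff]
  cases hx : z x <;> cases hx' : z' x <;> simp

lemma inter_card {N k i : ℕ} {z z' : Fin N → Bool} (hz : (supp z).card = k)
    (hz' : (supp z').card = k) (hd : hammingDist z z' = 2 * i) :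
    (supp z ∩ supp z').card = k - i := by
  have h1 := Finset.card_sdiff_add_card_inter (supp z) (supp z')
  have h2 := Finset.card_sdiff_add_card_inter (supp z') (supp z)
  rw [Finset.inter_comm] at h2
  rw [hd_supp] at hd
  omega

lemma card_D (N k : ℕ) : Fintype.card (DSet N k) = N.choose k := by
  have hpc : (Finset.powersetCard k (univ : Finset (Fin N))).card = N.choose k := by
    simp [Finset.card_powersetCard]
  rw [Fintype.card_subtype, ← hpc]
  refine Finset.card_nbij' (fun z => supp z) (fun S => fun x => decide (x ∈ S)) ?_ ?_ ?_ ?_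
  · intro z hz
    simp only [Finset.mem_coe, mem_filter, mem_univ, true_and] at hz
    simp [Finset.mem_powersetCard, hz, supp]
  · intro S hS
    simp only [Finset.mem_coe, Finset.mem_powersetCard] at hS
    simp only [Finset.mem_coe, mem_filter, mem_univ, true_and]
    rw [show (Finset.univ.filter fun x => decide (x ∈ S) = true)
        = supp (fun x => decide (x ∈ S)) from rfl, supp_decide]
    exact hS.2
  · intro z hz
    funext x
    simp [supp]
  · intro S hS
    exact supp_decide S

lemma count_z' {N k i : ℕ} (hi : i ≤ k) (z : Fin N → Bool)
    (hz : (supp z).card = k) :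
    (univ.filter fun z' : DSet N k => hammingDist z z'.val = 2 * i).card
      = k.choose i * (N - k).choose i := by
  have ht : ((powersetCard (k - i) (supp z)) ×ˢ (powersetCard i (supp z)ᶜ)).card
      = k.choose i * (N - k).choose i := by
    rw [card_product, card_powersetCard, card_powersetCard, card_compl,
      Fintype.card_fin, hz, Nat.choose_symm hi]
  rw [← ht]
  refine Finset.card_bij'
    (fun z' _ => (supp z ∩ supp z'.val, supp z'.val \ supp z))
    (fun TB hTB => ⟨fun x => decide (x ∈ TB.1 ∪ TB.2), ?_⟩) ?_ ?_ ?_ ?_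
  · rw [mem_product, mem_powersetCard, mem_powersetCard] at hTB
    obtain ⟨⟨hT1, hT2⟩, hB1, hB2⟩ := hTB
    have hdisj : Disjoint TB.1 TB.2 := by
      rw [Finset.disjoint_left]
      intro a haT haB
      exact (Finset.mem_compl.mp (hB1 haB)) (hT1 haT)
    have : (Finset.univ.filter fun x => decide (x ∈ TB.1 ∪ TB.2) = true)
        = TB.1 ∪ TB.2 := supp_decide _
    rw [this, card_union_of_disjoint hdisj, hT2, hB2]
    omega
  · intro z' hz'
    simp only [mem_filter, mem_univ, true_and] at hz'
    have hzc' : (supp z'.val).card = k := z'.2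
    have hint := inter_card hz hzc' hz'
    have h2 := Finset.card_sdiff_add_card_inter (supp z'.val) (supp z)
    rw [Finset.inter_comm] at h2
    rw [mem_product, mem_powersetCard, mem_powersetCard]
    refine ⟨⟨Finset.inter_subset_left, hint⟩, ?_, ?_⟩
    · intro x hx
      rw [Finset.mem_compl]
      exact (Finset.mem_sdiff.mp hx).2
    · show (supp z'.val \ supp z).card = i
      omega
  · intro TB hTB
    rw [mem_product, mem_powersetCard, mem_powersetCard] at hTB
    obtain ⟨⟨hT1, hT2⟩, hB1, hB2⟩ := hTB
    simp only [mem_filter, mem_univ, true_and]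
    have hsupp : supp (fun x => decide (x ∈ TB.1 ∪ TB.2)) = TB.1 ∪ TB.2 := supp_decide _
    rw [hd_supp]
    show (supp z \ supp (fun x => decide (x ∈ TB.1 ∪ TB.2))).card
      + (supp (fun x => decide (x ∈ TB.1 ∪ TB.2)) \ supp z).card = 2 * i
    rw [hsupp]
    have e1 : supp z \ (TB.1 ∪ TB.2) = supp z \ TB.1 := by
      ext x
      have hxB : x ∈ TB.2 → x ∉ supp z := fun h => Finset.mem_compl.mp (hB1 h)
      simp only [mem_sdiff, mem_union]
      tauto
    have e2 : (TB.1 ∪ TB.2) \ supp z = TB.2 := by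
      ext x
      have hxT : x ∈ TB.1 → x ∈ supp z := @hT1 x
      have hxB : x ∈ TB.2 → x ∉ supp z := fun h => Finset.mem_compl.mp (hB1 h)
      simp only [mem_sdiff, mem_union]
      tauto
    rw [e1, e2, Finset.card_sdiff_of_subset hT1, hz, hT2, hB2]
    omega
  · intro z' hz'
    apply Subtype.ext
    funext x
    show decide (x ∈ (supp z ∩ supp z'.val) ∪ (supp z'.val \ supp z)) = z'.val x
    have : (supp z ∩ supp z'.val) ∪ (supp z'.val \ supp z) = supp z'.val := by
      ext y
      simp only [mem_union, mem_inter, mem_sdiff]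
      tauto
    rw [this]
    cases h : z'.val x <;> simp [supp, h]
  · intro TB hTB
    rw [mem_product, mem_powersetCard, mem_powersetCard] at hTB
    obtain ⟨⟨hT1, hT2⟩, hB1, hB2⟩ := hTB
    have hsupp : supp (fun x => decide (x ∈ TB.1 ∪ TB.2)) = TB.1 ∪ TB.2 := supp_decide _
    have e1 : supp z ∩ (TB.1 ∪ TB.2) = TB.1 := by
      ext x
      have hxT : x ∈ TB.1 → x ∈ supp z := @hT1 x
      have hxB : x ∈ TB.2 → x ∉ supp z := fun h => Finset.mem_compl.mp (hB1 h)
      simp only [mem_inter, mem_union]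
      tauto
    have e2 : (TB.1 ∪ TB.2) \ supp z = TB.2 := by
      ext x
      have hxT : x ∈ TB.1 → x ∈ supp z := @hT1 x
      have hxB : x ∈ TB.2 → x ∉ supp z := fun h => Finset.mem_compl.mp (hB1 h)
      simp only [mem_sdiff, mem_union]
      tauto
    show (supp z ∩ supp (fun x => decide (x ∈ TB.1 ∪ TB.2)),
      supp (fun x => decide (x ∈ TB.1 ∪ TB.2)) \ supp z) = TB
    rw [hsupp, e1, e2]

lemma psi_inner {N k : ℕ} (z z' : DSet N k) :
    (∑ x : Fin N, PsiV N k z x * (starRingEnd ℂ) (PsiV N k z' x))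
      = ((supp z.val ∩ supp z'.val).card : ℂ) * ((k : ℂ))⁻¹ := by
  have hc : ((Real.sqrt k : ℝ)⁻¹ : ℂ) * (starRingEnd ℂ) ((Real.sqrt k : ℝ)⁻¹ : ℂ)
      = ((k : ℂ))⁻¹ := by
    rw [map_inv₀, Complex.conj_ofReal, ← mul_inv, ← Complex.ofReal_mul,
      Real.mul_self_sqrt (Nat.cast_nonneg k), Complex.ofReal_natCast]
  have key : ∀ x : Fin N, PsiV N k z x * (starRingEnd ℂ) (PsiV N k z' x)
      = if z.val x = true ∧ z'.val x = true then ((k : ℂ))⁻¹ else 0 := by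
    intro x
    unfold PsiV
    split_ifs with h1 h2 h3 <;> simp_all [hc]
  simp_rw [key]
  have hfe : Finset.univ.filter (fun x => z.val x = true ∧ z'.val x = true)
      = supp z.val ∩ supp z'.val := by
    ext x; simp [supp]
  rw [← Finset.sum_filter, Finset.sum_const, nsmul_eq_mul, hfe]

lemma trace_mul_vecMulVec {n : Type*} [Fintype n] (M : Matrix n n ℂ) (u v : n → ℂ) :
    (M * Matrix.vecMulVec u v).trace = ∑ p, ∑ q, M p q * u q * v p := by
  simp [Matrix.trace, Matrix.mul_apply, Matrix.vecMulVec_apply, Finset.sum_mul, mul_assoc,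
    mul_comm, mul_left_comm]

lemma trace_term {N k : ℕ} (i : ℕ) (z z' : DSet N k) :
    (∑ p : Fin N × DSet N k, ∑ q : Fin N × DSet N k,
      ((if p.1 = q.1 then (1:ℂ) else 0) * (if hammingDist p.2.val q.2.val = 2*i then 1 else 0))
        * (PsiV N k z q.1 * (if q.2 = z then 1 else 0))
        * ((starRingEnd ℂ) (PsiV N k z' p.1 * (if p.2 = z' then 1 else 0))))
    = (if hammingDist z'.val z.val = 2*i then 1 else 0)
        * ∑ x, PsiV N k z x * (starRingEnd ℂ) (PsiV N k z' x) := by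
  simp only [Fintype.sum_prod_type, map_mul, apply_ite (starRingEnd ℂ), map_one, map_zero,
    mul_ite, ite_mul, mul_zero, zero_mul, mul_one, one_mul,
    Finset.sum_ite_eq, Finset.sum_ite_eq', Finset.mem_univ, if_true,
    Finset.sum_ite_irrel, Finset.sum_const_zero]

theorem stmt11 (N k : ℕ) (hk1 : 1 ≤ k) (hkN : k ≤ N)
    (i i' : ℕ) (hi : i ≤ k) (hi' : i' ≤ k) :
    let M1 : Matrix (Fin N × DSet N k) (Fin N × DSet N k) ℂ :=
      Matrix.of fun p q =>
        (if p.1 = q.1 then (1 : ℂ) else 0) *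
          (if hammingDist p.2.val q.2.val = 2 * i then 1 else 0)
    let B : Matrix (Fin N × DSet N k) (Fin N × DSet N k) ℂ :=
      ∑ z : DSet N k, ∑ z' : DSet N k,
        if hammingDist z.val z'.val = 2 * i' then
          Matrix.vecMulVec
            (fun p : Fin N × DSet N k => PsiV N k z p.1 * (if p.2 = z then 1 else 0))
            (fun q : Fin N × DSet N k =>
              (starRingEnd ℂ) (PsiV N k z' q.1 * (if q.2 = z' then 1 else 0)))
        else 0
    Matrix.trace (M1 * B)
      = (if i = i' then (1 : ℂ) else 0) * (N.choose k : ℂ) * (k.choose i : ℂ) *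
          ((N - k).choose i : ℂ) * ((k - i : ℕ) : ℂ) / (k : ℂ) := by
  intro M1 B
  have hkC : (k : ℂ) ≠ 0 := by
    exact_mod_cast Nat.cast_ne_zero.mpr (by omega)
  have hstep : Matrix.trace (M1 * B)
      = ∑ z : DSet N k, ∑ z' : DSet N k,
          if hammingDist z.val z'.val = 2 * i' then
            (if hammingDist z'.val z.val = 2 * i then (1:ℂ) else 0)
              * (((supp z.val ∩ supp z'.val).card : ℂ) * ((k : ℂ))⁻¹)
          else 0 := by
    show Matrix.trace (M1 * B) = _
    simp only [B, Finset.mul_sum, Matrix.trace_sum]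
    refine Finset.sum_congr rfl fun z _ => Finset.sum_congr rfl fun z' _ => ?_
    by_cases h : hammingDist z.val z'.val = 2 * i'
    · rw [if_pos h, if_pos h, trace_mul_vecMulVec]
      simp only [M1, Matrix.of_apply]
      rw [trace_term i z z', psi_inner]
    · rw [if_neg h, if_neg h]
      simp
  rw [hstep]
  by_cases hii : i = i'
  · subst hii
    have hcong : ∀ z z' : DSet N k,
        (if hammingDist z.val z'.val = 2 * i then
            (if hammingDist z'.val z.val = 2 * i then (1:ℂ) else 0)
              * (((supp z.val ∩ supp z'.val).card : ℂ) * ((k : ℂ))⁻¹)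
          else 0)
        = if hammingDist z.val z'.val = 2 * i then
            ((k - i : ℕ) : ℂ) * ((k : ℂ))⁻¹ else 0 := by
      intro z z'
      rw [hammingDist_comm (x := z'.val)]
      by_cases h : hammingDist z.val z'.val = 2 * i
      · rw [if_pos h, if_pos h, if_pos h, inter_card z.2 z'.2 h, one_mul]
      · rw [if_neg h, if_neg h]
    simp_rw [hcong]
    have hinner : ∀ z : DSet N k,
        (∑ z' : DSet N k, if hammingDist z.val z'.val = 2 * i then
            ((k - i : ℕ) : ℂ) * ((k : ℂ))⁻¹ else 0)
        = (k.choose i * (N - k).choose i : ℕ) * (((k - i : ℕ) : ℂ) * ((k : ℂ))⁻¹) := by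
      intro z
      rw [← Finset.sum_filter, Finset.sum_const, nsmul_eq_mul, count_z' hi z.val z.2]
    simp_rw [hinner]
    rw [Finset.sum_const, Finset.card_univ, card_D, nsmul_eq_mul]
    simp only [if_true]
    push_cast
    field_simp
  · rw [if_neg hii]
    rw [Finset.sum_eq_zero, zero_mul, zero_mul, zero_mul, zero_mul, zero_div]
    intro z _
    rw [Finset.sum_eq_zero]
    intro z' _
    split_ifs with h1 h2
    · rw [hammingDist_comm] at h2
      omega
    · exact zero_mul _
    · rfl
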